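/- In the colored interval graph G_π built from a permutation π of {1,...,k}, no two distinct white vertices have the same red degree; that is, the map w_j ↦ (number of red neighbors of w_j) is injective on white vertices. -/

import Mathlib

/-- The intervals associated to a permutation `π` of `{1,…,k}`: red `R_j = [3j-1,3j]`,
blue `B_j = [3k+3j-2,3k+3j-1]`, white `W_j = [3j-2, 3k+3π(j)]` (indices `0`-based here). -/
noncomputable def permIvl (k : ℕ) (π : Equiv.Perm (Fin k)) :
    (Fin k ⊕ Fin k ⊕ Fin k) → Set ℝ :=
  Sum.elim (fun j => Set.Icc (3*(j:ℝ)+2) (3*(j:ℝ)+3))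
    (Sum.elim (fun j => Set.Icc (3*(k:ℝ)+3*(j:ℝ)+1) (3*(k:ℝ)+3*(j:ℝ)+2))
      (fun j => Set.Icc (3*(j:ℝ)+1) (3*(k:ℝ)+3*((π j : ℕ):ℝ)+3)))

/-- The intersection graph `G_π` of the intervals of `permIvl`. -/
noncomputable def permGraph (k : ℕ) (π : Equiv.Perm (Fin k)) :
    SimpleGraph (Fin k ⊕ Fin k ⊕ Fin k) where
  Adj u v := u ≠ v ∧ (permIvl k π u ∩ permIvl k π v).Nonempty
  symm := by
    refine ⟨?_⟩
    intro u v h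
    obtain ⟨h1, h2⟩ := h
    exact ⟨h1.symm, by rwa [Set.inter_comm]⟩
  loopless := by refine ⟨?_⟩; intro v h; exact h.1 rfl

/-- The 3-coloring: red, blue, white. -/
def permColor (k : ℕ) : (Fin k ⊕ Fin k ⊕ Fin k) → Fin 3 :=
  Sum.elim (fun _ => 0) (Sum.elim (fun _ => 1) (fun _ => 2))

lemma permGraph_white_red_adj_iff (k : ℕ) (π : Equiv.Perm (Fin k)) (j i : Fin k) :
    (permGraph k π).Adj (Sum.inr (Sum.inr j)) (Sum.inl i) ↔ j ≤ i := by
  have hik : ((i:ℕ):ℝ) < k := by exact_mod_cast i.isLt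
  have hπ : (0:ℝ) ≤ ((π j : ℕ):ℝ) := by positivity
  constructor
  · rintro ⟨-, x, hx1, hx2⟩
    simp only [permIvl, Sum.elim_inr, Sum.elim_inl, Set.mem_Icc] at hx1 hx2
    have h : 3*((j:ℕ):ℝ)+1 ≤ 3*((i:ℕ):ℝ)+3 := le_trans hx1.1 hx2.2
    have h2 : 3*(j:ℕ)+1 ≤ 3*(i:ℕ)+3 := by exact_mod_cast h
    exact Fin.le_def.mpr (by omega)
  · intro hji
    have hji' : ((j:ℕ):ℝ) ≤ ((i:ℕ):ℝ) := by exact_mod_cast Fin.le_def.mp hji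
    refine ⟨by simp, ⟨3*((i:ℕ):ℝ)+2, ?_, ?_⟩⟩ <;>
      simp only [permIvl, Sum.elim_inr, Sum.elim_inl, Set.mem_Icc] <;>
      constructor <;> linarith

/-- No two distinct white vertices of `G_π` have the same red degree. -/
theorem white_red_degree_injective (k : ℕ) (π : Equiv.Perm (Fin k)) :
    Function.Injective (fun j : Fin k =>
      Nat.card {i : Fin k //
        (permGraph k π).Adj (Sum.inr (Sum.inr j)) (Sum.inl i)}) := by
  have hcard : ∀ j : Fin k,
      Nat.card {i : Fin k //
        (permGraph k π).Adj (Sum.inr (Sum.inr j)) (Sum.inl i)} = k - (j:ℕ) := by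
    intro j
    have : ∀ i : Fin k,
        (permGraph k π).Adj (Sum.inr (Sum.inr j)) (Sum.inl i) ↔ j ≤ i :=
      fun i => permGraph_white_red_adj_iff k π j i
    calc Nat.card {i : Fin k //
        (permGraph k π).Adj (Sum.inr (Sum.inr j)) (Sum.inl i)}
        = Nat.card {i : Fin k // j ≤ i} := by
          exact Nat.card_congr (Equiv.subtypeEquivRight this)
      _ = (Finset.Ici j).card := by
          rw [Nat.card_eq_fintype_card, Fintype.card_subtype]
          congr 1
          ext i
          simp [Finset.mem_Ici]
      _ = k - (j:ℕ) := by
          exact Fin.card_Ici j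
  intro a b hab
  simp only [hcard] at hab
  have ha := a.isLt
  have hb := b.isLt
  exact Fin.ext (by omega)
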